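/- If τ_{AB} satisfies the phase symmetry U_θ τ_{kl} U_θ† = τ_{k+1,l+1} (mod M), then its partial transpose τ_{AB}^{T_A} satisfies the same symmetry, and consequently ||τ_{AB}^{T_A}||₁ = Σ_{k=0}^{M−1} ||Ẽ_k||₁, where ⊕_k Ẽ_k is the block-diagonal standard form of τ_{AB}^{T_A}. -/

import Mathlib

open Matrix Complex Finset
open scoped ComplexOrder

noncomputable section

/-- The trace norm ‖A‖₁ = Tr √(A†A). -/
def traceNorm {ι : Type*} [Fintype ι] [DecidableEq ι] (A : Matrix ι ι ℂ) : ℝ :=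
  (((Matrix.posSemidef_conjTranspose_mul_self A).isHermitian.eigenvectorUnitary.1 *
      diagonal ((fun x : ℝ => (x : ℂ)) ∘ (√·) ∘ (Matrix.posSemidef_conjTranspose_mul_self A).isHermitian.eigenvalues) *
      (star (Matrix.posSemidef_conjTranspose_mul_self A).isHermitian.eigenvectorUnitary :
        Matrix ι ι ℂ)).trace).re

open Fin.NatCast

namespace Matrix.PosSemidef

section PSqrt

open scoped MatrixOrder

variable {ι : Type*} [Fintype ι] [DecidableEq ι]

def sqrt {A : Matrix ι ι ℂ} (hA : A.PosSemidef) : Matrix ι ι ℂ :=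
  hA.isHermitian.eigenvectorUnitary.1 *
      diagonal ((fun x : ℝ => (x : ℂ)) ∘ (√·) ∘ hA.isHermitian.eigenvalues) *
      (star hA.isHermitian.eigenvectorUnitary : Matrix ι ι ℂ)

lemma sqrt_eq_cfc {A : Matrix ι ι ℂ} (hA : A.PosSemidef) : hA.sqrt = CFC.sqrt A := by
  rw [CFC.sqrt_eq_real_sqrt A hA.nonneg, cfcₙ_eq_cfc, hA.isHermitian.cfc_eq]
  rfl

lemma posSemidef_sqrt {A : Matrix ι ι ℂ} (hA : A.PosSemidef) : hA.sqrt.PosSemidef := by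
  rw [sqrt_eq_cfc]
  exact (CFC.sqrt_nonneg A).posSemidef

lemma sqrt_mul_self {A : Matrix ι ι ℂ} (hA : A.PosSemidef) : hA.sqrt * hA.sqrt = A := by
  rw [sqrt_eq_cfc]
  exact CFC.sqrt_mul_sqrt_self A hA.nonneg

lemma eq_sqrt_of_sq_eq {A B : Matrix ι ι ℂ} (hB : B.PosSemidef) (hA : A.PosSemidef)
    (h : B ^ 2 = A) : B = hA.sqrt := by
  rw [sqrt_eq_cfc]
  exact (CFC.sqrt_unique (by rw [← pow_two]; exact h) hB.nonneg).symm

end PSqrt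

end Matrix.PosSemidef

lemma traceNorm_def {ι : Type*} [Fintype ι] [DecidableEq ι] (A : Matrix ι ι ℂ) :
    traceNorm A = (((Matrix.posSemidef_conjTranspose_mul_self A).sqrt.trace)).re := rfl

namespace TNAux

variable {ι κ : Type*} [Fintype ι] [DecidableEq ι] [Fintype κ] [DecidableEq κ]

lemma sqrt_congr {A B : Matrix ι ι ℂ} (hA : A.PosSemidef) (hB : B.PosSemidef)
    (h : A = B) : hA.sqrt = hB.sqrt := by subst h; rfl

lemma traceNorm_eq_of_gram_eq {A B : Matrix ι ι ℂ} (h : Aᴴ * A = Bᴴ * B) :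
    traceNorm A = traceNorm B := by
  simp only [traceNorm_def]
  rw [sqrt_congr (Matrix.posSemidef_conjTranspose_mul_self A)
    (Matrix.posSemidef_conjTranspose_mul_self B) h]

lemma traceNorm_conj_unitary (W A : Matrix ι ι ℂ) (hW : W ∈ Matrix.unitaryGroup ι ℂ) :
    traceNorm (W * A * Wᴴ) = traceNorm A := by
  have h1 : Wᴴ * W = 1 := by
    simpa [Matrix.star_eq_conjTranspose] using Matrix.mem_unitaryGroup_iff'.mp hW
  have hP := Matrix.posSemidef_conjTranspose_mul_self A
  have h1' : ∀ X : Matrix ι ι ℂ, Wᴴ * (W * X) = X := fun X => by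
    rw [← Matrix.mul_assoc, h1, Matrix.one_mul]
  have hgram : (W * A * Wᴴ)ᴴ * (W * A * Wᴴ) = W * (Aᴴ * A) * Wᴴ := by
    simp only [conjTranspose_mul, conjTranspose_conjTranspose, Matrix.mul_assoc, h1']
  have hsq : (W * hP.sqrt * Wᴴ) ^ 2 = (W * A * Wᴴ)ᴴ * (W * A * Wᴴ) := by
    rw [hgram, pow_two]
    simp only [Matrix.mul_assoc, h1']
    rw [← Matrix.mul_assoc hP.sqrt, hP.sqrt_mul_self, Matrix.mul_assoc]
  have hsqrt : (Matrix.posSemidef_conjTranspose_mul_self (W * A * Wᴴ)).sqrt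
      = W * hP.sqrt * Wᴴ :=
    ((hP.posSemidef_sqrt.mul_mul_conjTranspose_same W).eq_sqrt_of_sq_eq
      (Matrix.posSemidef_conjTranspose_mul_self (W * A * Wᴴ)) hsq).symm
  simp only [traceNorm_def]
  rw [hsqrt, Matrix.trace_mul_cycle, h1, Matrix.one_mul]

lemma posSemidef_blockDiagonal {P : κ → Matrix ι ι ℂ} (h : ∀ k, (P k).PosSemidef) :
    (Matrix.blockDiagonal P).PosSemidef := by
  have : Matrix.blockDiagonal P
      = (Matrix.blockDiagonal fun k => (h k).sqrt)ᴴ * Matrix.blockDiagonal fun k => (h k).sqrt := by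
    rw [Matrix.blockDiagonal_conjTranspose, ← Matrix.blockDiagonal_mul]
    have he : (fun k => ((h k).sqrt)ᴴ * (h k).sqrt) = P :=
      funext fun k => by rw [(h k).posSemidef_sqrt.1, (h k).sqrt_mul_self]
    rw [he]
  rw [this]
  exact Matrix.posSemidef_conjTranspose_mul_self _

lemma sqrt_blockDiagonal {P : κ → Matrix ι ι ℂ} (h : ∀ k, (P k).PosSemidef)
    (hbd : (Matrix.blockDiagonal P).PosSemidef) :
    hbd.sqrt = Matrix.blockDiagonal fun k => (h k).sqrt := by
  symm
  apply Matrix.PosSemidef.eq_sqrt_of_sq_eq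
      (posSemidef_blockDiagonal fun k => (h k).posSemidef_sqrt)
  rw [pow_two, ← Matrix.blockDiagonal_mul]
  have he : (fun k => (h k).sqrt * (h k).sqrt) = P :=
    funext fun k => (h k).sqrt_mul_self
  rw [he]

lemma traceNorm_blockDiagonal (E : κ → Matrix ι ι ℂ) :
    traceNorm (Matrix.blockDiagonal E) = ∑ k, traceNorm (E k) := by
  simp only [traceNorm_def]
  have hgram : (Matrix.blockDiagonal E)ᴴ * Matrix.blockDiagonal E
      = Matrix.blockDiagonal fun k => (E k)ᴴ * E k := by
    rw [Matrix.blockDiagonal_conjTranspose, ← Matrix.blockDiagonal_mul]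
  rw [sqrt_congr _ (hgram ▸ posSemidef_blockDiagonal
      fun k => Matrix.posSemidef_conjTranspose_mul_self (E k)) hgram,
    sqrt_blockDiagonal (fun k => Matrix.posSemidef_conjTranspose_mul_self (E k)),
    Matrix.trace_blockDiagonal]
  exact Complex.re_sum _ _

lemma traceNorm_submatrix (A : Matrix ι ι ℂ) (e : κ ≃ ι) :
    traceNorm (A.submatrix e e) = traceNorm A := by
  simp only [traceNorm_def]
  have hP := Matrix.posSemidef_conjTranspose_mul_self A
  have hgram : (A.submatrix e e)ᴴ * (A.submatrix e e) = (Aᴴ * A).submatrix e e := by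
    rw [Matrix.conjTranspose_submatrix, Matrix.submatrix_mul_equiv]
  have hsqrt : (Matrix.posSemidef_conjTranspose_mul_self (A.submatrix e e)).sqrt
      = hP.sqrt.submatrix e e := by
    symm
    apply Matrix.PosSemidef.eq_sqrt_of_sq_eq (hP.posSemidef_sqrt.submatrix e)
    rw [pow_two, Matrix.submatrix_mul_equiv, hP.sqrt_mul_self, hgram]
  rw [hsqrt]
  congr 1
  simp only [Matrix.trace, Matrix.diag, Matrix.submatrix_apply]
  exact Fintype.sum_equiv e _ _ fun i => rfl

lemma ortho {M : ℕ} [NeZero M] (a b : Fin M) :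
    ∑ l : Fin M, (Complex.exp (2 * Real.pi * Complex.I / M)) ^ (a.val * l.val)
      * ((starRingEnd ℂ) (Complex.exp (2 * Real.pi * Complex.I / M))) ^ (b.val * l.val)
    = if a = b then (M : ℂ) else 0 := by
  set ω := Complex.exp (2 * Real.pi * Complex.I / M) with hωdef
  have hprim : IsPrimitiveRoot ω M := Complex.isPrimitiveRoot_exp M (NeZero.ne M)
  have hωM : ω ^ M = 1 := hprim.pow_eq_one
  have hcc : (starRingEnd ℂ) ω * ω = 1 := by
    rw [hωdef, ← Complex.exp_conj, ← Complex.exp_add]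
    have : (starRingEnd ℂ) (2 * (Real.pi : ℂ) * Complex.I / M) 
        = -(2 * (Real.pi : ℂ) * Complex.I / M) := by
      simp [map_div₀, Complex.conj_I, map_ofNat]
      ring
    rw [this, neg_add_cancel, Complex.exp_zero]
  set σ := (starRingEnd ℂ) ω with hσdef
  have hσM : σ ^ M = 1 := by rw [hσdef, ← map_pow, hωM, _root_.map_one]
  set ζ := ω ^ a.val * σ ^ b.val with hζdef
  have hterm : ∀ l : Fin M, ω ^ (a.val * l.val) * σ ^ (b.val * l.val) = ζ ^ l.val := by
    intro l
    rw [hζdef, mul_pow, ← pow_mul, ← pow_mul]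
  have hζM : ζ ^ M = 1 := by
    rw [hζdef, mul_pow, ← pow_mul, ← pow_mul, mul_comm a.val, mul_comm b.val,
      pow_mul, pow_mul, hωM, hσM, one_pow, one_pow, one_mul]
  simp only [hterm]
  rw [Fin.sum_univ_eq_sum_range (fun i => ζ ^ i) M]
  by_cases hab : a = b
  · have hζ1 : ζ = 1 := by
      rw [hζdef, hab, ← mul_pow, mul_comm, hcc, one_pow]
    simp [hζ1, hab]
  · have hζ1 : ζ ≠ 1 := by
      intro h
      apply hab
      have hpow : ω ^ a.val = ω ^ b.val := by
        have h2 := congrArg (· * ω ^ b.val) h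
        simp only [one_mul] at h2
        rw [hζdef] at h2
        calc ω ^ a.val = ω ^ a.val * (σ ^ b.val * ω ^ b.val) := by
              rw [← mul_pow, hcc, one_pow, mul_one]
          _ = ω ^ b.val := by rw [← mul_assoc, h2]
      exact Fin.ext (hprim.pow_inj a.isLt b.isLt hpow)
    rw [geom_sum_eq hζ1, hζM, sub_self, zero_div]
    simp [hab]

end TNAux

/-- The partial transpose of a phase-symmetric bipartite matrix satisfies the same
symmetry, and its trace norm is the sum of the trace norms of its standard-form blocks. -/
theorem partial_transpose_symmetry_and_trace_norm {M N : ℕ} [NeZero M]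
    (τ : Fin M → Fin M → Matrix (Fin N) (Fin N) ℂ)
    (U : Matrix (Fin N) (Fin N) ℂ) (hU : U ∈ Matrix.unitaryGroup (Fin N) ℂ)
    (hUM : U ^ M = 1)
    (hsym : ∀ k l : Fin M, U * τ k l * Uᴴ = τ (k + 1) (l + 1))
    (Etil : Fin M → Matrix (Fin N) (Fin N) ℂ)
    (hEtil : ∀ k, Etil k = (1 / M : ℂ) • ∑ l : Fin M,
        (Complex.exp (2 * Real.pi * Complex.I / M)) ^ (k.val * l.val) •
          (τ l k * U ^ l.val)) :
    (∀ k l : Fin M, U * τ l k * Uᴴ = τ (l + 1) (k + 1)) ∧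
    traceNorm (Matrix.of fun p q : Fin M × Fin N =>
        (1 / M : ℂ) * τ q.1 p.1 p.2 q.2) = ∑ k : Fin M, traceNorm (Etil k) := by
  refine ⟨fun k l => hsym l k, ?_⟩
  -- notation
  set ω : ℂ := Complex.exp (2 * Real.pi * Complex.I / M) with hωdef
  set σ : ℂ := (starRingEnd ℂ) ω with hσdef
  have hM0 : (M : ℂ) ≠ 0 := Nat.cast_ne_zero.mpr (NeZero.ne M)
  have hprim : IsPrimitiveRoot ω M := Complex.isPrimitiveRoot_exp M (NeZero.ne M)
  have hωM : ω ^ M = 1 := hprim.pow_eq_one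
  -- unitary basics
  have hUH : Uᴴ * U = 1 := by
    simpa [Matrix.star_eq_conjTranspose] using Matrix.mem_unitaryGroup_iff'.mp hU
  have hUj : ∀ j : ℕ, (Uᴴ) ^ j * U ^ j = 1 := by
    intro j
    induction j with
    | zero => simp
    | succ n ih =>
      rw [pow_succ, pow_succ', Matrix.mul_assoc, ← Matrix.mul_assoc Uᴴ, hUH,
        Matrix.one_mul, ih]
  have hUj' : ∀ j : ℕ, U ^ j * (Uᴴ) ^ j = 1 := by
    have hUH' : U * Uᴴ = 1 := by
      simpa [Matrix.star_eq_conjTranspose] using Matrix.mem_unitaryGroup_iff.mp hU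
    intro j
    induction j with
    | zero => simp
    | succ n ih =>
      rw [pow_succ, pow_succ', Matrix.mul_assoc, ← Matrix.mul_assoc U, hUH',
        Matrix.one_mul, ih]
  have hUmod : ∀ e : ℕ, U ^ (e % M) = U ^ e := by
    intro e
    conv_rhs => rw [← Nat.mod_add_div e M]
    rw [pow_add, pow_mul, hUM, one_pow, mul_one]
  have hωmod : ∀ e : ℕ, ω ^ (e % M) = ω ^ e := by
    intro e
    conv_rhs => rw [← Nat.mod_add_div e M]
    rw [pow_add, pow_mul, hωM, one_pow, mul_one]
  have hUadd : ∀ l d : Fin M, U ^ ((l + d) : Fin M).val = U ^ l.val * U ^ d.val := by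
    intro l d
    rw [Fin.val_add, hUmod, pow_add]
  have hωadd : ∀ (b : ℕ) (l d : Fin M),
      ω ^ (b * ((l + d) : Fin M).val) = ω ^ (b * l.val) * ω ^ (b * d.val) := by
    intro b l d
    rw [mul_comm b, pow_mul, Fin.val_add, hωmod, pow_add, mul_pow, ← pow_mul, ← pow_mul,
      mul_comm l.val b, mul_comm d.val b]
  -- iterated symmetry
  have hshift : ∀ (j : ℕ) (k l : Fin M),
      U ^ j * τ k l * (Uᴴ) ^ j = τ (k + (j : Fin M)) (l + (j : Fin M)) := by
    intro j
    induction j with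
    | zero => intro k l; simp
    | succ n ih =>
      intro k l
      have hc : ((n + 1 : ℕ) : Fin M) = ((n : ℕ) : Fin M) + 1 := by push_cast; ring
      rw [hc, ← add_assoc, ← add_assoc, ← hsym, ← ih k l, pow_succ', pow_succ]
      simp only [Matrix.mul_assoc]
  have hτ : ∀ l d : Fin M, τ (l + d) l = U ^ l.val * τ d 0 * (Uᴴ) ^ l.val := by
    intro l d
    have h := hshift l.val d 0
    rw [Fin.cast_val_eq_self, zero_add, add_comm d l] at h
    exact h.symm
  have hG : ∀ l d : Fin M,
      (Uᴴ) ^ l.val * τ (l + d) l * U ^ ((l + d) : Fin M).val = τ d 0 * U ^ d.val := by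
    intro l d
    have e1 : ∀ X : Matrix (Fin N) (Fin N) ℂ,
        (Uᴴ) ^ l.val * (U ^ l.val * X) = X := fun X => by
      rw [← Matrix.mul_assoc, hUj, Matrix.one_mul]
    rw [hτ l d, hUadd l d]
    simp only [Matrix.mul_assoc, e1]
  -- the blocks
  set B : Fin M → Matrix (Fin N) (Fin N) ℂ :=
    fun k => (1 / M : ℂ) • ∑ d : Fin M, ω ^ (k.val * d.val) • (τ d 0 * U ^ d.val) with hBdef
  have hEB : ∀ k, Etil k = ω ^ (k.val * k.val) • (U ^ k.val * B k) := by
    intro k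
    rw [hEtil k, hBdef]
    simp only [Matrix.mul_smul, Matrix.mul_sum, smul_smul, Finset.smul_sum]
    have e1 : ∀ X : Matrix (Fin N) (Fin N) ℂ,
        (Uᴴ) ^ k.val * (U ^ k.val * X) = X := fun X => by
      rw [← Matrix.mul_assoc, hUj, Matrix.one_mul]
    refine (Fintype.sum_equiv (Equiv.addLeft k) _ _ fun d => ?_).symm
    simp only [Equiv.coe_addLeft]
    rw [hτ k d, hUadd k d, hωadd k.val k d]
    have hmat : U ^ k.val * τ d 0 * (Uᴴ) ^ k.val * (U ^ k.val * U ^ d.val)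
        = U ^ k.val * (τ d 0 * U ^ d.val) := by
      simp only [Matrix.mul_assoc, e1]
    rw [hmat]
    ring_nf
  have hcc : σ * ω = 1 := by
    rw [hσdef, hωdef, ← Complex.exp_conj, ← Complex.exp_add]
    have hc : (starRingEnd ℂ) (2 * (Real.pi : ℂ) * Complex.I / M)
        = -(2 * (Real.pi : ℂ) * Complex.I / M) := by
      simp [map_div₀, Complex.conj_I, map_ofNat]
      ring
    rw [hc, neg_add_cancel, Complex.exp_zero]
  -- trace norms of blocks agree
  have hEtilB : ∀ k, traceNorm (Etil k) = traceNorm (B k) := by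
    intro k
    apply TNAux.traceNorm_eq_of_gram_eq
    rw [hEB k]
    have e1 : ∀ X : Matrix (Fin N) (Fin N) ℂ,
        (U ^ k.val)ᴴ * (U ^ k.val * X) = X := fun X => by
      rw [← Matrix.mul_assoc, Matrix.conjTranspose_pow, hUj, Matrix.one_mul]
    have hstar : (starRingEnd ℂ) (ω ^ (k.val * k.val)) * ω ^ (k.val * k.val) = 1 := by
      rw [map_pow, ← hσdef, ← mul_pow, hcc, one_pow]
    rw [Matrix.conjTranspose_smul, Matrix.conjTranspose_mul, Matrix.smul_mul,
      Matrix.mul_smul, smul_smul]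
    rw [Matrix.mul_assoc, e1]
    rw [show star (ω ^ (k.val * k.val)) = (starRingEnd ℂ) (ω ^ (k.val * k.val)) from rfl,
      hstar, one_smul]
  -- the unitary W
  set c0 : ℂ := ((Real.sqrt M : ℝ) : ℂ)⁻¹ with hc0def
  have hc0 : c0 * (starRingEnd ℂ) c0 = (M : ℂ)⁻¹ := by
    rw [hc0def, map_inv₀, Complex.conj_ofReal, ← mul_inv, ← Complex.ofReal_mul,
      Real.mul_self_sqrt (Nat.cast_nonneg M), Complex.ofReal_natCast]
  set W : Matrix (Fin M × Fin N) (Fin M × Fin N) ℂ :=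
    Matrix.of (fun p q : Fin M × Fin N =>
      c0 * σ ^ (p.1.val * q.1.val) * ((Uᴴ ^ q.1.val) p.2 q.2)) with hWdef
  have hortho : ∀ a b : Fin M,
      ∑ l : Fin M, ω ^ (a.val * l.val) * σ ^ (b.val * l.val)
        = if a = b then (M : ℂ) else 0 := fun a b => TNAux.ortho a b
  have hWW : W * Wᴴ = 1 := by
    ext ⟨a, n⟩ ⟨b, n'⟩
    rw [Matrix.mul_apply, Fintype.sum_prod_type]
    simp only [hWdef, Matrix.conjTranspose_apply, Matrix.of_apply]
    have hσstar : star σ = ω := by rw [hσdef, starRingEnd_apply, star_star]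
    have hc0' : c0 * star c0 = (M : ℂ)⁻¹ := by rw [← starRingEnd_apply]; exact hc0
    have hinner : ∀ l : Fin M, ∑ m : Fin N,
        c0 * σ ^ (a.val * l.val) * (Uᴴ ^ l.val) n m
          * star (c0 * σ ^ (b.val * l.val) * (Uᴴ ^ l.val) n' m)
        = (ω ^ (b.val * l.val) * σ ^ (a.val * l.val))
            * ((M : ℂ)⁻¹ * (1 : Matrix (Fin N) (Fin N) ℂ) n n') := by
      intro l
      have hUU : (Uᴴ ^ l.val) * (Uᴴ ^ l.val)ᴴ = 1 := by
        rw [Matrix.conjTranspose_pow, Matrix.conjTranspose_conjTranspose]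
        exact hUj l.val
      calc ∑ m : Fin N, c0 * σ ^ (a.val * l.val) * (Uᴴ ^ l.val) n m
              * star (c0 * σ ^ (b.val * l.val) * (Uᴴ ^ l.val) n' m)
          = ∑ m : Fin N, (ω ^ (b.val * l.val) * σ ^ (a.val * l.val)) * ((M : ℂ)⁻¹
              * ((Uᴴ ^ l.val) n m * ((Uᴴ ^ l.val)ᴴ) m n')) := by
            refine Finset.sum_congr rfl fun m _ => ?_
            rw [star_mul', star_mul', star_pow, hσstar]
            rw [show star ((Uᴴ ^ l.val) n' m) = ((Uᴴ ^ l.val)ᴴ) m n' from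
              (Matrix.conjTranspose_apply _ _ _).symm]
            rw [← hc0']
            ring
        _ = (ω ^ (b.val * l.val) * σ ^ (a.val * l.val))
              * ((M : ℂ)⁻¹ * (1 : Matrix (Fin N) (Fin N) ℂ) n n') := by
            rw [← Finset.mul_sum, ← Finset.mul_sum, ← Matrix.mul_apply, hUU]
    simp only [hinner]
    rw [← Finset.sum_mul, hortho b a]
    by_cases hab : a = b
    · subst hab
      simp only [if_pos rfl, if_true, Matrix.one_apply, Prod.mk.injEq, true_and]
      rw [← mul_assoc, mul_inv_cancel₀ hM0, one_mul]
    · rw [if_neg (fun h => hab h.symm), zero_mul]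
      rw [Matrix.one_apply_ne (by simp [Prod.ext_iff, hab])]
  have hWgrp : W ∈ Matrix.unitaryGroup (Fin M × Fin N) ℂ := by
    rw [Matrix.mem_unitaryGroup_iff, Matrix.star_eq_conjTranspose]
    exact hWW
  set A : Matrix (Fin M × Fin N) (Fin M × Fin N) ℂ :=
    Matrix.of (fun p q : Fin M × Fin N => (1 / M : ℂ) * τ q.1 p.1 p.2 q.2) with hAdef
  have hσstar2 : star σ = ω := by rw [hσdef, starRingEnd_apply, star_star]
  have hc0'' : c0 * star c0 = (M : ℂ)⁻¹ := by rw [← starRingEnd_apply]; exact hc0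
  have hD : W * A * Wᴴ = (Matrix.blockDiagonal B).submatrix
      (Equiv.prodComm (Fin M) (Fin N)) (Equiv.prodComm (Fin M) (Fin N)) := by
    ext ⟨a, n⟩ ⟨b, n'⟩
    have hWA : ∀ (l' : Fin M) (m' : Fin N), (W * A) (a, n) (l', m')
        = ∑ l : Fin M, (c0 * (1 / M : ℂ) * σ ^ (a.val * l.val))
            * (((Uᴴ) ^ l.val * τ l' l) n m') := by
      intro l' m'
      rw [Matrix.mul_apply, Fintype.sum_prod_type]
      refine Finset.sum_congr rfl fun l _ => ?_
      rw [Matrix.mul_apply, Finset.mul_sum]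
      refine Finset.sum_congr rfl fun m _ => ?_
      simp only [hWdef, hAdef, Matrix.of_apply]
      ring
    have hWc : ∀ (l' : Fin M) (m' : Fin N), Wᴴ (l', m') (b, n')
        = (star c0 * ω ^ (b.val * l'.val)) * ((U ^ l'.val) m' n') := by
      intro l' m'
      rw [Matrix.conjTranspose_apply, hWdef, Matrix.of_apply, star_mul', star_mul',
        star_pow, hσstar2,
        show star ((Uᴴ ^ l'.val) n' m') = ((Uᴴ ^ l'.val)ᴴ) m' n' from
          (Matrix.conjTranspose_apply _ _ _).symm,
        Matrix.conjTranspose_pow, Matrix.conjTranspose_conjTranspose]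
    have step1 : (W * A * Wᴴ) (a, n) (b, n')
        = ∑ l' : Fin M, ∑ l : Fin M, ((M : ℂ)⁻¹ * (1 / M : ℂ))
            * (σ ^ (a.val * l.val) * ω ^ (b.val * l'.val))
            * (((Uᴴ) ^ l.val * τ l' l * U ^ l'.val) n n') := by
      rw [Matrix.mul_apply, Fintype.sum_prod_type]
      refine Finset.sum_congr rfl fun l' _ => ?_
      calc ∑ m' : Fin N, (W * A) (a, n) (l', m') * Wᴴ (l', m') (b, n')
          = ∑ m' : Fin N, ∑ l : Fin M,
              ((c0 * (1 / M : ℂ) * σ ^ (a.val * l.val)) * (((Uᴴ) ^ l.val * τ l' l) n m'))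
              * ((star c0 * ω ^ (b.val * l'.val)) * ((U ^ l'.val) m' n')) := by
            refine Finset.sum_congr rfl fun m' _ => ?_
            rw [hWA l' m', hWc l' m', Finset.sum_mul]
        _ = ∑ l : Fin M, ((M : ℂ)⁻¹ * (1 / M : ℂ))
              * (σ ^ (a.val * l.val) * ω ^ (b.val * l'.val))
              * (((Uᴴ) ^ l.val * τ l' l * U ^ l'.val) n n') := by
            rw [Finset.sum_comm]
            refine Finset.sum_congr rfl fun l _ => ?_
            rw [← hc0'']
            conv_rhs => rw [Matrix.mul_apply]
            rw [Finset.mul_sum]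
            refine Finset.sum_congr rfl fun m' _ => ?_
            ring
    have step2 : ∀ l : Fin M, ∑ l' : Fin M, ((M : ℂ)⁻¹ * (1 / M : ℂ))
          * (σ ^ (a.val * l.val) * ω ^ (b.val * l'.val))
          * (((Uᴴ) ^ l.val * τ l' l * U ^ l'.val) n n')
        = ∑ d : Fin M, ((M : ℂ)⁻¹ * (1 / M : ℂ))
          * ((ω ^ (b.val * l.val) * σ ^ (a.val * l.val)) * ω ^ (b.val * d.val))
          * ((τ d 0 * U ^ d.val) n n') := by
      intro l
      refine (Fintype.sum_equiv (Equiv.addLeft l) _ _ fun d => ?_).symm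
      simp only [Equiv.coe_addLeft]
      rw [hG l d, hωadd b.val l d]
      ring
    have step3 : ∑ l : Fin M, ∑ d : Fin M, ((M : ℂ)⁻¹ * (1 / M : ℂ))
          * ((ω ^ (b.val * l.val) * σ ^ (a.val * l.val)) * ω ^ (b.val * d.val))
          * ((τ d 0 * U ^ d.val) n n')
        = (∑ l : Fin M, ω ^ (b.val * l.val) * σ ^ (a.val * l.val))
          * ∑ d : Fin M, ((M : ℂ)⁻¹ * (1 / M : ℂ)) * ω ^ (b.val * d.val)
            * ((τ d 0 * U ^ d.val) n n') := by
      rw [Finset.sum_mul]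
      refine Finset.sum_congr rfl fun l _ => ?_
      rw [Finset.mul_sum]
      refine Finset.sum_congr rfl fun d _ => ?_
      ring
    rw [step1, Finset.sum_comm]
    simp only [step2]
    rw [step3, hortho b a]
    rw [Matrix.submatrix_apply, Matrix.blockDiagonal_apply]
    simp only [Equiv.prodComm_apply, Prod.swap_prod_mk, Prod.fst, Prod.snd]
    by_cases hab : a = b
    · subst hab
      rw [if_pos rfl]
      simp only [eq_self_iff_true, ↓reduceIte]
      rw [hBdef]
      simp only [Matrix.smul_apply, Matrix.sum_apply, smul_eq_mul, Finset.mul_sum]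
      refine Finset.sum_congr rfl fun d _ => ?_
      field_simp
    · rw [if_neg (fun h => hab h.symm)]
      simp [hab]
  calc traceNorm A = traceNorm (W * A * Wᴴ) :=
        (TNAux.traceNorm_conj_unitary W A hWgrp).symm
    _ = traceNorm ((Matrix.blockDiagonal B).submatrix
        (Equiv.prodComm (Fin M) (Fin N)) (Equiv.prodComm (Fin M) (Fin N))) := by rw [hD]
    _ = traceNorm (Matrix.blockDiagonal B) :=
        TNAux.traceNorm_submatrix _ _
    _ = ∑ k : Fin M, traceNorm (B k) := TNAux.traceNorm_blockDiagonal B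
    _ = ∑ k : Fin M, traceNorm (Etil k) :=
        Finset.sum_congr rfl fun k _ => (hEtilB k).symm
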